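/- Fix d, M, T ≥ 1 and 1 ≤ t ≤ T. On a probability space, let {(x_{s,i}, y_{s,i}) : 1 ≤ s ≤ T, 1 ≤ i ≤ M} and the query pair (x_{t,q}, y_{t,q}) be mutually independent ℝ^d × ℝ-valued random pairs with finite second moments of x_{s,i}y_{s,i}, such that for each s the pairs (x_{s,i}, y_{s,i}) are i.i.d. with mean μ_s = E[x_{s,i} y_{s,i}] and covariance Σ_s = Var(x_{s,i} y_{s,i}), the query pair has the same distribution as the task-t pairs, E[x_{t,q}] = 0 and E[x_{t,q} x_{t,q}^T] = Λ. Define Ŷ_{t,q} = x_{t,q}^T Γ^{−1} ( (1/(T(M+1)+1)) Σ_{s=1}^T Σ_{i=1}^M x_{s,i} y_{s,i} ), β = M/(T(M+1)+1), a = Λ^{−1} μ_t, b = Γ^{−1} β Σ_{s=1}^T μ_s. Then E[(Ŷ_{t,q} − y_{t,q})^2] = min_{w ∈ ℝ^d} E[(w^T x_{t,q} − y_{t,q})^2] + (M/(T(M+1)+1)^2) Σ_{s=1}^T tr(Σ_s Γ^{−2} Λ) + (b − a)^T Λ (b − a), and writing Λ = Σ_i λ_i u_i u_i^T, s_i = u_i^T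 Σ_{s=1}^T μ_s, m_i = u_i^T μ_t, the last term equals Σ_{i=1}^d (1/λ_i) ( (λ_i(β s_i − m_i) − m_i (λ_i + tr(Λ))/N) / (λ_i + (λ_i + tr(Λ))/N) )^2. -/

import Mathlib

open MeasureTheory ProbabilityTheory Matrix BigOperators
open scoped ENNReal

lemma aux_exp : (1:ℝ≥0∞)/1 = 1/2 + 1/2 := by
  rw [one_div, one_div, ENNReal.inv_two_add_inv_two]; norm_num

lemma aux_int_mul {Ω : Type*} [MeasurableSpace Ω] {P : Measure Ω} [IsFiniteMeasure P]
    {f g : Ω → ℝ} (hf : MemLp f 2 P) (hg : MemLp g 2 P) :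
    Integrable (fun ω => f ω * g ω) P := by
  have h : MemLp (g • f) 1 P := hf.smul (r := 1) hg
  have := h.integrable le_rfl
  simp [Pi.smul_apply, smul_eq_mul, mul_comm] at this
  exact this

lemma aux_vmv_mul {d : ℕ} (a b c e : Fin d → ℝ) :
    vecMulVec a b * vecMulVec c e = (b ⬝ᵥ c) • vecMulVec a e := by
  ext k l
  simp only [Matrix.mul_apply, vecMulVec_apply, Matrix.smul_apply, dotProduct, smul_eq_mul,
    Finset.sum_mul]
  exact Finset.sum_congr rfl fun i _ => by ring

lemma aux_vmv_mulVec {d : ℕ} (a b v : Fin d → ℝ) :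
    vecMulVec a b *ᵥ v = (b ⬝ᵥ v) • a := by
  ext k
  simp only [mulVec, dotProduct, vecMulVec_apply, Pi.smul_apply, smul_eq_mul, Finset.sum_mul]
  exact Finset.sum_congr rfl fun i _ => by ring

lemma aux_sum_proj_one {d : ℕ} {u : Fin d → Fin d → ℝ}
    (hortho : ∀ i j, u i ⬝ᵥ u j = if i = j then (1:ℝ) else 0) :
    ∑ i, vecMulVec (u i) (u i) = (1 : Matrix (Fin d) (Fin d) ℝ) := by
  classical
  set U : Matrix (Fin d) (Fin d) ℝ := Matrix.of u with hU
  have h1 : U * Uᵀ = 1 := by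
    ext i j
    have := hortho i j
    simpa [Matrix.mul_apply, Matrix.one_apply, dotProduct, hU] using this
  have h2 : Uᵀ * U = 1 := mul_eq_one_comm.mp h1
  ext k l
  have := congrFun (congrFun h2 k) l
  simp only [Matrix.mul_apply, Matrix.transpose_apply, hU, Matrix.of_apply] at this
  simp only [Matrix.sum_apply, vecMulVec_apply]
  rw [← this]

lemma aux_sum_proj_mul {d : ℕ} {u : Fin d → Fin d → ℝ}
    (hortho : ∀ i j, u i ⬝ᵥ u j = if i = j then (1:ℝ) else 0) (f g : Fin d → ℝ) :
    (∑ i, f i • vecMulVec (u i) (u i)) * (∑ j, g j • vecMulVec (u j) (u j))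
      = ∑ i, (f i * g i) • vecMulVec (u i) (u i) := by
  classical
  rw [Finset.sum_mul]
  refine Finset.sum_congr rfl fun i _ => ?_
  rw [Finset.mul_sum]
  have key : ∀ j, (f i • vecMulVec (u i) (u i)) * (g j • vecMulVec (u j) (u j))
      = if j = i then (f i * g i) • vecMulVec (u i) (u i) else 0 := by
    intro j
    rw [Matrix.smul_mul, Matrix.mul_smul, aux_vmv_mul, hortho]
    by_cases h : i = j
    · subst h; simp [smul_smul, mul_comm]
    · simp [h, Ne.symm h]
  simp only [key, Finset.sum_ite_eq', Finset.mem_univ, if_true]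

lemma aux_mulVec_sum {d : ℕ} {ι : Type*} (s : Finset ι) (A : Matrix (Fin d) (Fin d) ℝ)
    (f : ι → Fin d → ℝ) : A *ᵥ (∑ i ∈ s, f i) = ∑ i ∈ s, A *ᵥ f i := by
  ext k
  simp only [mulVec, dotProduct, Finset.sum_apply]
  rw [Finset.sum_comm]
  exact Finset.sum_congr rfl fun l _ => by rw [Finset.mul_sum]

lemma aux_sum_proj_mulVec {d : ℕ} (u : Fin d → Fin d → ℝ) (f : Fin d → ℝ) (v : Fin d → ℝ) :
    (∑ i, f i • vecMulVec (u i) (u i)) *ᵥ v = ∑ i, (f i * (u i ⬝ᵥ v)) • u i := by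
  ext k
  simp only [mulVec, dotProduct, Matrix.sum_apply, Matrix.smul_apply, vecMulVec_apply,
    Finset.sum_apply, Pi.smul_apply, smul_eq_mul, Finset.sum_mul]
  rw [Finset.sum_comm]
  refine Finset.sum_congr rfl fun i _ => ?_
  rw [Finset.mul_sum, Finset.sum_mul]
  exact Finset.sum_congr rfl fun l _ => by ring

lemma aux_dot_ortho {d : ℕ} {u : Fin d → Fin d → ℝ}
    (hortho : ∀ i j, u i ⬝ᵥ u j = if i = j then (1:ℝ) else 0) (f g : Fin d → ℝ) :
    (∑ i, f i • u i) ⬝ᵥ (∑ j, g j • u j) = ∑ i, f i * g i := by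
  classical
  have expand : (∑ i, f i • u i) ⬝ᵥ (∑ j, g j • u j)
      = ∑ i, ∑ j, (f i * g j) * (u i ⬝ᵥ u j) := by
    simp only [dotProduct, Finset.sum_apply, Pi.smul_apply, smul_eq_mul]
    have step : ∀ k, (∑ i, f i * u i k) * (∑ j, g j * u j k)
        = ∑ i, ∑ j, (f i * u i k) * (g j * u j k) := fun k => Finset.sum_mul_sum _ _ _ _
    simp only [step]
    rw [Finset.sum_comm]
    refine Finset.sum_congr rfl fun i _ => ?_
    rw [Finset.sum_comm]
    refine Finset.sum_congr rfl fun j _ => ?_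
    rw [Finset.mul_sum]
    exact Finset.sum_congr rfl fun k _ => by ring
  rw [expand]
  refine Finset.sum_congr rfl fun i _ => ?_
  rw [Finset.sum_eq_single i]
  · rw [hortho]; simp
  · intro j _ hj; rw [hortho]; simp [Ne.symm hj]
  · intro h; exact absurd (Finset.mem_univ i) h

lemma aux_scalar (L G bs m0 : ℝ) (hL : L ≠ 0) (hG : G ≠ 0) :
    L * (G⁻¹ * bs - L⁻¹ * m0) ^ 2 = (1/L) * ((L * bs - m0 * G) / G) ^ 2 := by
  field_simp
set_option maxHeartbeats 3000000 in
/-- Prediction error for task `t` after `T` tasks: with mutually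
independent in-context pairs (i.i.d. within each task), query pair distributed as the
task-`t` pairs, `E[x_{t,q}] = 0`, `E[x_{t,q}x_{t,q}ᵀ] = Λ`, and
`Ŷ_{t,q} = x_{t,q}ᵀΓ⁻¹((1/(T(M+1)+1)) Σ_{s=1}^T Σ_i x_{s,i}y_{s,i})`, one has
`E[(Ŷ−y)²] = min_w E[(wᵀx−y)²] + (M/(T(M+1)+1)²) Σ_s tr(Σ_sΓ⁻²Λ) + (b−a)ᵀΛ(b−a)`,
the minimum being attained at `a = Λ⁻¹μ_t`, with `b = Γ⁻¹βΣ_sμ_s`; moreover the bias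
term has the explicit eigen-coordinate form
`Σ_i (1/λ_i)((λ_i(βs_i − m_i) − m_i(λ_i+trΛ)/N)/(λ_i + (λ_i+trΛ)/N))²`. -/
theorem stmt_16 (d M T t : ℕ) (hd : 1 ≤ d) (hM : 1 ≤ M) (hT : 1 ≤ T)
    (ht1 : 1 ≤ t) (htT : t ≤ T)
    (Ω : Type*) [MeasurableSpace Ω] (P : Measure Ω) [IsProbabilityMeasure P]
    (x : Fin T → Fin M → Ω → Fin d → ℝ) (y : Fin T → Fin M → Ω → ℝ)
    (xq : Ω → Fin d → ℝ) (yq : Ω → ℝ)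
    (hxmeas : ∀ s i, Measurable (x s i)) (hymeas : ∀ s i, Measurable (y s i))
    (hxqmeas : Measurable xq) (hyqmeas : Measurable yq)
    (hindep : iIndepFun (m :=
        (fun _ : (Fin T × Fin M) ⊕ Unit =>
          (inferInstance : MeasurableSpace ((Fin d → ℝ) × ℝ))))
        (Sum.elim (fun p ω => (x p.1 p.2 ω, y p.1 p.2 ω)) (fun _ ω => (xq ω, yq ω))) P)
    (hiid : ∀ s i j, IdentDistrib (fun ω => (x s i ω, y s i ω))
        (fun ω => (x s j ω, y s j ω)) P P)
    (tl : Fin T) (htl : (tl : ℕ) = t - 1)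
    (hqdist : ∀ i, IdentDistrib (fun ω => (xq ω, yq ω))
        (fun ω => (x tl i ω, y tl i ω)) P P)
    (h2 : ∀ s i k, MemLp (fun ω => x s i ω k * y s i ω) 2 P)
    (hyq2 : MemLp yq 2 P) (hxq2 : ∀ k, MemLp (fun ω => xq ω k) 2 P)
    (hqmean : ∀ k, ∫ ω, xq ω k ∂P = 0)
    (Λ : Matrix (Fin d) (Fin d) ℝ) (hΛpd : Λ.PosDef) (hΛsym : Λ.IsSymm)
    (hΛq : ∀ k l, ∫ ω, xq ω k * xq ω l ∂P = Λ k l)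
    (lam : Fin d → ℝ) (u : Fin d → Fin d → ℝ)
    (hlam : ∀ i, 0 < lam i)
    (hortho : ∀ i j, u i ⬝ᵥ u j = if i = j then (1 : ℝ) else 0)
    (hΛeig : Λ = ∑ i, lam i • vecMulVec (u i) (u i))
    (N : ℝ) (hN : 0 < N)
    (Γ : Matrix (Fin d) (Fin d) ℝ)
    (hΓ : Γ = (1 + 1 / N) • Λ + (Λ.trace / N) • (1 : Matrix (Fin d) (Fin d) ℝ))
    (μ : Fin T → Fin d → ℝ)
    (hμ : ∀ s i, μ s = fun k => ∫ ω, x s i ω k * y s i ω ∂P)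
    (Sig : Fin T → Matrix (Fin d) (Fin d) ℝ)
    (hSig : ∀ s i, Sig s = Matrix.of fun k l =>
        (∫ ω, (x s i ω k * y s i ω) * (x s i ω l * y s i ω) ∂P) - μ s k * μ s l)
    (β : ℝ) (hβ : β = (M : ℝ) / ((T : ℝ) * ((M : ℝ) + 1) + 1))
    (a b : Fin d → ℝ) (ha : a = Λ⁻¹ *ᵥ μ tl) (hb : b = Γ⁻¹ *ᵥ (β • ∑ s, μ s))
    (s : Fin d → ℝ) (hs : ∀ i, s i = u i ⬝ᵥ ∑ s', μ s')
    (m : Fin d → ℝ) (hm : ∀ i, m i = u i ⬝ᵥ μ tl)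
    (Yhat : Ω → ℝ)
    (hYhat : ∀ ω, Yhat ω = xq ω ⬝ᵥ (Γ⁻¹ *ᵥ
        ((1 / ((T : ℝ) * ((M : ℝ) + 1) + 1)) • ∑ s', ∑ i, y s' i ω • x s' i ω))) :
    (∀ w : Fin d → ℝ,
        ∫ ω, (a ⬝ᵥ xq ω - yq ω) ^ 2 ∂P ≤ ∫ ω, (w ⬝ᵥ xq ω - yq ω) ^ 2 ∂P) ∧
    (∫ ω, (Yhat ω - yq ω) ^ 2 ∂P
      = (∫ ω, (a ⬝ᵥ xq ω - yq ω) ^ 2 ∂P)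
        + ((M : ℝ) / ((T : ℝ) * ((M : ℝ) + 1) + 1) ^ 2)
            * ∑ s', (Sig s' * (Γ⁻¹ * Γ⁻¹) * Λ).trace
        + (b - a) ⬝ᵥ (Λ *ᵥ (b - a))) ∧
    (b - a) ⬝ᵥ (Λ *ᵥ (b - a))
      = ∑ i, (1 / lam i) *
          ((lam i * (β * s i - m i) - m i * (lam i + Λ.trace) / N)
            / (lam i + (lam i + Λ.trace) / N)) ^ 2 := by  classical
  haveI hne : Nonempty (Fin d) := ⟨⟨0, hd⟩⟩
  have i0 : Fin M := ⟨0, hM⟩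
  -- ===================== linear algebra layer =====================
  have hsum1 := aux_sum_proj_one hortho
  have htrΛ : Λ.trace = ∑ i, lam i := by
    rw [hΛeig, Matrix.trace_sum]
    refine Finset.sum_congr rfl fun i _ => ?_
    rw [Matrix.trace_smul]
    have h1 : (vecMulVec (u i) (u i)).trace = u i ⬝ᵥ u i := by
      simp [Matrix.trace, Matrix.diag, vecMulVec_apply, dotProduct]
    rw [h1, hortho]
    simp
  have htrpos : 0 < Λ.trace := by
    rw [htrΛ]; exact Finset.sum_pos (fun i _ => hlam i) Finset.univ_nonempty
  have hγpos : ∀ i, 0 < lam i + (lam i + Λ.trace)/N :=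
    fun i => add_pos (hlam i) (div_pos (add_pos (hlam i) htrpos) hN)
  have hΓeig : Γ = ∑ i, (lam i + (lam i + Λ.trace)/N) • vecMulVec (u i) (u i) := by
    have e1 : (1 + 1/N) • Λ = ∑ i, ((1 + 1/N) * lam i) • vecMulVec (u i) (u i) := by
      rw [hΛeig, Finset.smul_sum]
      exact Finset.sum_congr rfl fun i _ => by rw [smul_smul]
    have e2 : (Λ.trace/N) • (1 : Matrix (Fin d) (Fin d) ℝ)
        = ∑ i, (Λ.trace/N) • vecMulVec (u i) (u i) := by
      rw [← hsum1, Finset.smul_sum]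
    rw [hΓ, e1, e2, ← Finset.sum_add_distrib]
    refine Finset.sum_congr rfl fun i _ => ?_
    rw [← add_smul]
    congr 1
    field_simp
    ring
  have hΓinv : Γ⁻¹ = ∑ i, (lam i + (lam i + Λ.trace)/N)⁻¹ • vecMulVec (u i) (u i) := by
    refine Matrix.inv_eq_right_inv ?_
    rw [hΓeig, aux_sum_proj_mul hortho, ← hsum1]
    refine Finset.sum_congr rfl fun i _ => ?_
    rw [mul_inv_cancel₀ (hγpos i).ne', one_smul]
  have hΛinvP : Λ⁻¹ = ∑ i, (lam i)⁻¹ • vecMulVec (u i) (u i) := by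
    refine Matrix.inv_eq_right_inv ?_
    rw [hΛeig, aux_sum_proj_mul hortho, ← hsum1]
    refine Finset.sum_congr rfl fun i _ => ?_
    rw [mul_inv_cancel₀ (hlam i).ne', one_smul]
  have hΛmul : Λ * Λ⁻¹ = 1 := by
    rw [hΛinvP, hΛeig, aux_sum_proj_mul hortho, ← hsum1]
    refine Finset.sum_congr rfl fun i _ => ?_
    rw [mul_inv_cancel₀ (hlam i).ne', one_smul]
  have hΛa : Λ *ᵥ a = μ tl := by
    rw [ha, Matrix.mulVec_mulVec, hΛmul, Matrix.one_mulVec]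
  have hΓsym' : ∀ i j, Γ⁻¹ i j = Γ⁻¹ j i := by
    intro i j
    rw [hΓinv]
    simp only [Matrix.sum_apply, Matrix.smul_apply, vecMulVec_apply, smul_eq_mul]
    exact Finset.sum_congr rfl fun i' _ => by ring
  have hcomm : Λ * Γ⁻¹ = Γ⁻¹ * Λ := by
    rw [hΓinv, hΛeig, aux_sum_proj_mul hortho, aux_sum_proj_mul hortho]
    exact Finset.sum_congr rfl fun i _ => by rw [mul_comm]
  -- ===================== part 3 =====================
  have hu_eig : ∀ j, Λ *ᵥ u j = lam j • u j := by
    intro j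
    rw [hΛeig, aux_sum_proj_mulVec]
    rw [Finset.sum_eq_single j]
    · rw [hortho]; simp
    · intro i _ hij; rw [hortho]; simp [hij]
    · intro h; exact absurd (Finset.mem_univ j) h
  have hquad : ∀ cv : Fin d → ℝ,
      (∑ i, cv i • u i) ⬝ᵥ (Λ *ᵥ ∑ i, cv i • u i) = ∑ i, lam i * cv i ^ 2 := by
    intro cv
    have h1 : Λ *ᵥ (∑ i, cv i • u i) = ∑ i, (cv i * lam i) • u i := by
      rw [aux_mulVec_sum]
      refine Finset.sum_congr rfl fun i _ => ?_
      rw [Matrix.mulVec_smul, hu_eig i, smul_smul]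
    rw [h1, aux_dot_ortho hortho]
    exact Finset.sum_congr rfl fun i _ => by ring
  have hbeig : b = ∑ i, ((lam i + (lam i + Λ.trace)/N)⁻¹ * (β * s i)) • u i := by
    rw [hb, hΓinv, aux_sum_proj_mulVec]
    refine Finset.sum_congr rfl fun i _ => ?_
    congr 1
    rw [dotProduct_smul, smul_eq_mul, hs i]
  have haeig : a = ∑ i, ((lam i)⁻¹ * m i) • u i := by
    rw [ha, hΛinvP, aux_sum_proj_mulVec]
    refine Finset.sum_congr rfl fun i _ => ?_
    rw [hm i]
  have hdiff : b - a
      = ∑ i, ((lam i + (lam i + Λ.trace)/N)⁻¹ * (β * s i) - (lam i)⁻¹ * m i) • u i := by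
    rw [hbeig, haeig, ← Finset.sum_sub_distrib]
    exact Finset.sum_congr rfl fun i _ => (sub_smul _ _ _).symm
  have part3 : (b - a) ⬝ᵥ (Λ *ᵥ (b - a))
      = ∑ i, (1 / lam i) *
          ((lam i * (β * s i - m i) - m i * (lam i + Λ.trace) / N)
            / (lam i + (lam i + Λ.trace) / N)) ^ 2 := by
    rw [hdiff, hquad]
    refine Finset.sum_congr rfl fun i _ => ?_
    have hnum : lam i * (β * s i - m i) - m i * (lam i + Λ.trace) / N
        = lam i * (β * s i) - m i * (lam i + (lam i + Λ.trace) / N) := by ring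
    rw [hnum]
    exact aux_scalar _ _ _ _ (hlam i).ne' (hγpos i).ne'
    -- ===================== quadratic form layer =====================
  set Qf : (Fin d → ℝ) → (Fin d → ℝ) → ℝ := fun v w => ∑ k, ∑ k', v k * w k' * Λ k k' with hQf
  have hQdot : ∀ v w : Fin d → ℝ, v ⬝ᵥ (Λ *ᵥ w) = Qf v w := by
    intro v w
    simp only [hQf, dotProduct, mulVec, Finset.mul_sum]
    exact Finset.sum_congr rfl fun k _ => Finset.sum_congr rfl fun k' _ => by ring
  have hQsymm : ∀ v w, Qf v w = Qf w v := by
    intro v w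
    simp only [hQf]
    rw [Finset.sum_comm]
    refine Finset.sum_congr rfl fun k _ => Finset.sum_congr rfl fun k' _ => ?_
    rw [hΛsym.apply k k']
    ring
  have hposd : ∀ v : Fin d → ℝ, 0 ≤ Qf v v := by
    intro v
    rw [← hQdot]
    have h0 := hΛpd.posSemidef.dotProduct_mulVec_nonneg v
    simpa using h0
  have hexpand : ∀ v w : Fin d → ℝ,
      (v - w) ⬝ᵥ (Λ *ᵥ (v - w)) = Qf v v - 2 * Qf v w + Qf w w := by
    intro v w
    rw [Matrix.mulVec_sub, sub_dotProduct, dotProduct_sub, dotProduct_sub,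
      hQdot, hQdot, hQdot, hQdot, hQsymm w v]
    ring
  have hadot : ∀ v : Fin d → ℝ, (∑ k, v k * μ tl k) = Qf v a := by
    intro v
    rw [← hQdot, hΛa]
    rfl
  -- ===================== symmetry / trace identities =====================
  have hSig_symm : ∀ s'', (Sig s'')ᵀ = Sig s'' := by
    intro s''
    ext k l
    rw [Matrix.transpose_apply, hSig s'' i0]
    simp only [Matrix.of_apply]
    have hcg : (fun ω => x s'' i0 ω l * y s'' i0 ω * (x s'' i0 ω k * y s'' i0 ω))
        = fun ω => x s'' i0 ω k * y s'' i0 ω * (x s'' i0 ω l * y s'' i0 ω) := by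
      funext ω; ring
    rw [hcg]
    ring
  have hΓit : Γ⁻¹ᵀ = Γ⁻¹ := by
    ext i j
    rw [Matrix.transpose_apply]
    exact hΓsym' j i
  have htrace_id : ∀ s'', (∑ k, ∑ k', Λ k k' * (Γ⁻¹ * Sig s'' * Γ⁻¹) k k')
      = (Sig s'' * (Γ⁻¹ * Γ⁻¹) * Λ).trace := by
    intro s''
    have hXsym : (Γ⁻¹ * Sig s'' * Γ⁻¹)ᵀ = Γ⁻¹ * Sig s'' * Γ⁻¹ := by
      rw [Matrix.transpose_mul, Matrix.transpose_mul, hΓit, hSig_symm s'', Matrix.mul_assoc]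
    have hXsym' : ∀ i j, (Γ⁻¹ * Sig s'' * Γ⁻¹) i j = (Γ⁻¹ * Sig s'' * Γ⁻¹) j i := by
      intro i j
      conv_lhs => rw [← hXsym]
      rw [Matrix.transpose_apply]
    have h1 : ∀ X : Matrix (Fin d) (Fin d) ℝ, (∀ i j, X i j = X j i) →
        (∑ k, ∑ k', Λ k k' * X k k') = (Λ * X).trace := by
      intro X hX
      simp only [Matrix.trace, Matrix.diag_apply, Matrix.mul_apply]
      refine Finset.sum_congr rfl fun k _ => Finset.sum_congr rfl fun k' _ => ?_
      rw [hX k k']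
    rw [h1 _ hXsym']
    calc (Λ * (Γ⁻¹ * Sig s'' * Γ⁻¹)).trace
        = ((Γ⁻¹ * Λ) * (Sig s'' * Γ⁻¹)).trace := by
          rw [← hcomm]; simp only [Matrix.mul_assoc]
      _ = ((Sig s'' * Γ⁻¹) * (Γ⁻¹ * Λ)).trace := Matrix.trace_mul_comm _ _
      _ = (Sig s'' * Γ⁻¹ * (Λ * Γ⁻¹)).trace := by
          rw [hcomm]
      _ = (Sig s'' * (Γ⁻¹ * Γ⁻¹) * Λ).trace := by
          rw [hcomm]; simp only [Matrix.mul_assoc]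
  -- ===================== probabilistic layer (to fill) =====================
  have hEq : ∀ k, ∫ ω, xq ω k * yq ω ∂P = μ tl k := by
    intro k
    have hmb : Measurable fun p : (Fin d → ℝ) × ℝ => p.1 k * p.2 :=
      ((measurable_pi_apply k).comp measurable_fst).mul measurable_snd
    have h1 := (hqdist i0).comp hmb
    have h2' := h1.integral_eq
    rw [hμ tl i0]
    exact h2'
  have hyqsqint : Integrable (fun ω => yq ω ^ 2) P := hyq2.integrable_sq
  have hrisk : ∀ v : Fin d → ℝ, ∫ ω, (v ⬝ᵥ xq ω - yq ω) ^ 2 ∂P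
      = Qf v v - 2 * (∑ k, v k * μ tl k) + ∫ ω, yq ω ^ 2 ∂P := by
    intro v
    have hpt : ∀ ω, (v ⬝ᵥ xq ω - yq ω) ^ 2
        = (∑ k, ∑ k', (v k * v k') * (xq ω k * xq ω k'))
          - 2 * (∑ k, v k * (xq ω k * yq ω)) + yq ω ^ 2 := by
      intro ω
      have e1 : (v ⬝ᵥ xq ω) ^ 2 = ∑ k, ∑ k', (v k * v k') * (xq ω k * xq ω k') := by
        rw [sq, dotProduct, Finset.sum_mul_sum]
        exact Finset.sum_congr rfl fun k _ => Finset.sum_congr rfl fun k' _ => by ring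
      have e2 : (v ⬝ᵥ xq ω) * yq ω = ∑ k, v k * (xq ω k * yq ω) := by
        rw [dotProduct, Finset.sum_mul]
        exact Finset.sum_congr rfl fun k _ => by ring
      rw [sub_sq, e1, mul_assoc, e2]
    simp only [hpt]
    have i1 : ∀ k k', Integrable (fun ω => (v k * v k') * (xq ω k * xq ω k')) P :=
      fun k k' => (aux_int_mul (hxq2 k) (hxq2 k')).const_mul _
    have i1' : Integrable (fun ω => ∑ k, ∑ k', (v k * v k') * (xq ω k * xq ω k')) P :=
      integrable_finset_sum _ fun k _ => integrable_finset_sum _ fun k' _ => i1 k k'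
    have i2 : ∀ k, Integrable (fun ω => v k * (xq ω k * yq ω)) P :=
      fun k => (aux_int_mul (hxq2 k) hyq2).const_mul _
    have i2' : Integrable (fun ω => ∑ k, v k * (xq ω k * yq ω)) P :=
      integrable_finset_sum _ fun k _ => i2 k
    have E1 : ∫ ω, (∑ k, ∑ k', (v k * v k') * (xq ω k * xq ω k')) ∂P = Qf v v := by
      rw [integral_finset_sum _ fun k _ => integrable_finset_sum _ fun k' _ => i1 k k']
      refine Finset.sum_congr rfl fun k _ => ?_
      rw [integral_finset_sum _ fun k' _ => i1 k k']
      refine Finset.sum_congr rfl fun k' _ => ?_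
      rw [integral_const_mul, hΛq k k']
    have E2 : ∫ ω, (∑ k, v k * (xq ω k * yq ω)) ∂P = ∑ k, v k * μ tl k := by
      rw [integral_finset_sum _ fun k _ => i2 k]
      refine Finset.sum_congr rfl fun k _ => ?_
      rw [integral_const_mul, hEq k]
    have im : Integrable (fun ω => 2 * ∑ k, v k * (xq ω k * yq ω)) P := i2'.const_mul 2
    have isub : Integrable (fun ω => (∑ k, ∑ k', (v k * v k') * (xq ω k * xq ω k'))
        - 2 * ∑ k, v k * (xq ω k * yq ω)) P := i1'.sub im
    rw [integral_add isub hyqsqint, integral_sub i1' im, integral_const_mul, E1, E2]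
  set c : ℝ := 1 / ((T : ℝ) * ((M : ℝ) + 1) + 1) with hc
  have hden0 : ((T : ℝ) * ((M : ℝ) + 1) + 1) ≠ 0 := by positivity
  have hmain : ∫ ω, (Yhat ω - yq ω) ^ 2 ∂P
      = (∑ k, ∑ k', Λ k k' * (b k * b k'
            + c ^ 2 * (M : ℝ) * ∑ s', (Γ⁻¹ * Sig s' * Γ⁻¹) k k'))
        - 2 * (∑ k, μ tl k * b k) + ∫ ω, yq ω ^ 2 ∂P := by
    set G : Ω → (Fin T × Fin M) → (Fin d → ℝ) × ℝ :=
      fun ω p => (x p.1 p.2 ω, y p.1 p.2 ω) with hG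
    set Vf : ((Fin T × Fin M) → (Fin d → ℝ) × ℝ) → Fin d → ℝ :=
      fun g k => ∑ l, Γ⁻¹ k l * (c * ∑ p, (g p).1 l * (g p).2) with hVf
    set V : Ω → Fin d → ℝ := fun ω => Vf (G ω) with hV
    set Sf : Ω → Fin d → ℝ :=
      fun ω l => ∑ p : Fin T × Fin M, x p.1 p.2 ω l * y p.1 p.2 ω with hSf
    have hVS : ∀ ω k, V ω k = ∑ l, Γ⁻¹ k l * (c * Sf ω l) := fun ω k => rfl
    -- measurability of Vf
    have hVfmeas : ∀ k, Measurable fun g : (Fin T × Fin M) → (Fin d → ℝ) × ℝ => Vf g k := by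
      intro k
      refine Finset.measurable_sum _ fun l _ => ?_
      refine Measurable.const_mul ?_ _
      refine Measurable.const_mul ?_ _
      refine Finset.measurable_sum _ fun p _ => ?_
      fun_prop
    -- joint independence of query pair and the whole family
    have hFmeas : ∀ j, Measurable
        (Sum.elim (fun p : Fin T × Fin M => fun ω => (x p.1 p.2 ω, y p.1 p.2 ω))
          (fun _ : Unit => fun ω => (xq ω, yq ω)) j) := by
      rintro (p | u')
      · exact (hxmeas p.1 p.2).prodMk (hymeas p.1 p.2)
      · exact hxqmeas.prodMk hyqmeas
    have hdisj : Disjoint ({Sum.inr ()} : Finset ((Fin T × Fin M) ⊕ Unit))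
        (Finset.univ.image Sum.inl) := by
      simp [Finset.disjoint_left]
    have base := hindep.indepFun_finset {Sum.inr ()} (Finset.univ.image Sum.inl) hdisj hFmeas
    have hQG : IndepFun (fun ω => (xq ω, yq ω)) G P := by
      have hφ : Measurable fun g : ({Sum.inr ()} : Finset ((Fin T × Fin M) ⊕ Unit)) →
          (Fin d → ℝ) × ℝ => g ⟨Sum.inr (), by simp⟩ := measurable_pi_apply _
      have hψ : Measurable fun g : ((Finset.univ.image Sum.inl :
            Finset ((Fin T × Fin M) ⊕ Unit))) → (Fin d → ℝ) × ℝ =>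
          (fun p : Fin T × Fin M => g ⟨Sum.inl p, by simp⟩) :=
        measurable_pi_lambda _ fun p => measurable_pi_apply _
      exact base.comp hφ hψ
    -- L² facts
    have hS2 : ∀ l, MemLp (fun ω => Sf ω l) 2 P := by
      intro l
      exact memLp_finset_sum Finset.univ fun (p : Fin T × Fin M) _ => h2 p.1 p.2 l
    have hV2 : ∀ k, MemLp (fun ω => V ω k) 2 P := by
      intro k
      have h0 : MemLp (fun ω => ∑ l, Γ⁻¹ k l * (c * Sf ω l)) 2 P :=
        memLp_finset_sum Finset.univ fun l _ => ((hS2 l).const_mul c).const_mul (Γ⁻¹ k l)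
      exact h0
    -- basic integrals over the family
    have hxyint : ∀ (p : Fin T × Fin M) l,
        ∫ ω, x p.1 p.2 ω l * y p.1 p.2 ω ∂P = μ p.1 l := by
      intro p l; rw [hμ p.1 p.2]
    have hxyxy : ∀ (p p' : Fin T × Fin M) l l',
        ∫ ω, (x p.1 p.2 ω l * y p.1 p.2 ω) * (x p'.1 p'.2 ω l' * y p'.1 p'.2 ω) ∂P
          = μ p.1 l * μ p'.1 l' + (if p = p' then Sig p.1 l l' else 0) := by
      intro p p' l l'
      by_cases hpp : p = p'
      · subst hpp
        rw [if_pos rfl, hSig p.1 p.2]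
        simp only [Matrix.of_apply]
        ring
      · rw [if_neg hpp, add_zero]
        have hne : (Sum.inl p : (Fin T × Fin M) ⊕ Unit) ≠ Sum.inl p' := by
          simpa using hpp
        have h0 := hindep.indepFun hne
        have hφ1 : Measurable fun q : (Fin d → ℝ) × ℝ => q.1 l * q.2 :=
          ((measurable_pi_apply l).comp measurable_fst).mul measurable_snd
        have hφ2 : Measurable fun q : (Fin d → ℝ) × ℝ => q.1 l' * q.2 :=
          ((measurable_pi_apply l').comp measurable_fst).mul measurable_snd
        have hind := h0.comp hφ1 hφ2
        have heq := IndepFun.integral_fun_mul_eq_mul_integral hind (h2 p.1 p.2 l).aestronglyMeasurable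
          (h2 p'.1 p'.2 l').aestronglyMeasurable
        rw [show (∫ ω, (x p.1 p.2 ω l * y p.1 p.2 ω) * (x p'.1 p'.2 ω l' * y p'.1 p'.2 ω) ∂P)
            = (∫ ω, x p.1 p.2 ω l * y p.1 p.2 ω ∂P)
              * (∫ ω, x p'.1 p'.2 ω l' * y p'.1 p'.2 ω ∂P) from heq,
          hxyint p l, hxyint p' l']
    have hintxy : ∀ (p : Fin T × Fin M) l,
        Integrable (fun ω => x p.1 p.2 ω l * y p.1 p.2 ω) P :=
      fun p l => (h2 p.1 p.2 l).integrable one_le_two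
    have hμsum : ∀ l, (∑ p : Fin T × Fin M, μ p.1 l) = (M : ℝ) * ∑ s', μ s' l := by
      intro l
      rw [Fintype.sum_prod_type]
      simp [Finset.sum_const, Finset.card_univ, Finset.mul_sum]
    have hSfint : ∀ l, ∫ ω, Sf ω l ∂P = (M : ℝ) * ∑ s', μ s' l := by
      intro l
      simp only [hSf]
      rw [integral_finset_sum _ fun p _ => hintxy p l,
        Finset.sum_congr rfl fun p _ => hxyint p l, hμsum l]
    have hSS : ∀ l l', ∫ ω, Sf ω l * Sf ω l' ∂P
        = ((M : ℝ) * ∑ s', μ s' l) * ((M : ℝ) * ∑ s', μ s' l')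
          + (M : ℝ) * ∑ s', Sig s' l l' := by
      intro l l'
      have hptw : ∀ ω, Sf ω l * Sf ω l'
          = ∑ p : Fin T × Fin M, ∑ p' : Fin T × Fin M,
              (x p.1 p.2 ω l * y p.1 p.2 ω) * (x p'.1 p'.2 ω l' * y p'.1 p'.2 ω) := by
        intro ω; simp only [hSf]; exact Finset.sum_mul_sum _ _ _ _
      simp only [hptw]
      rw [integral_finset_sum _ fun p _ => integrable_finset_sum _ fun p' _ =>
        aux_int_mul (h2 p.1 p.2 l) (h2 p'.1 p'.2 l')]
      have step : ∀ p : Fin T × Fin M,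
          (∫ ω, ∑ p' : Fin T × Fin M,
              (x p.1 p.2 ω l * y p.1 p.2 ω) * (x p'.1 p'.2 ω l' * y p'.1 p'.2 ω) ∂P)
            = ∑ p' : Fin T × Fin M,
                (μ p.1 l * μ p'.1 l' + if p = p' then Sig p.1 l l' else 0) := by
        intro p
        rw [integral_finset_sum _ fun p' _ => aux_int_mul (h2 p.1 p.2 l) (h2 p'.1 p'.2 l')]
        exact Finset.sum_congr rfl fun p' _ => hxyxy p p' l l'
      rw [Finset.sum_congr rfl fun p _ => step p]
      simp only [Finset.sum_add_distrib]
      congr 1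
      · rw [← Finset.sum_mul_sum, ← hμsum l, ← hμsum l']
      · have hdiag : ∀ p : Fin T × Fin M,
            (∑ p' : Fin T × Fin M, if p = p' then Sig p.1 l l' else 0) = Sig p.1 l l' := by
          intro p; simp
        rw [Finset.sum_congr rfl fun p _ => hdiag p, Fintype.sum_prod_type]
        simp [Finset.sum_const, Finset.card_univ, Finset.mul_sum]

    -- expectation of V
    have hSfintg : ∀ l, Integrable (fun ω => Sf ω l) P :=
      fun l => (hS2 l).integrable one_le_two
    have hbex : ∀ k, b k = ∑ l, Γ⁻¹ k l * (c * ((M : ℝ) * ∑ s', μ s' l)) := by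
      intro k
      rw [hb]
      simp only [mulVec, dotProduct, Pi.smul_apply, smul_eq_mul, Finset.sum_apply]
      refine Finset.sum_congr rfl fun l _ => ?_
      rw [hβ, hc]
      field_simp
    have hVint : ∀ k, ∫ ω, V ω k ∂P = b k := by
      intro k
      have h0 : (fun ω => V ω k) = fun ω => ∑ l, Γ⁻¹ k l * (c * Sf ω l) := rfl
      rw [h0, integral_finset_sum _ fun l _ => ((hSfintg l).const_mul _).const_mul _]
      rw [hbex k]
      refine Finset.sum_congr rfl fun l _ => ?_
      rw [integral_const_mul, integral_const_mul, hSfint l]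
    -- second moment of V
    have hVV : ∀ k k', ∫ ω, V ω k * V ω k' ∂P
        = b k * b k' + c ^ 2 * (M : ℝ) * ∑ s', (Γ⁻¹ * Sig s' * Γ⁻¹) k k' := by
      intro k k'
      have hptw : ∀ ω, V ω k * V ω k'
          = ∑ l, ∑ l', (Γ⁻¹ k l * Γ⁻¹ k' l' * c ^ 2) * (Sf ω l * Sf ω l') := by
        intro ω
        calc V ω k * V ω k'
            = (∑ l, Γ⁻¹ k l * (c * Sf ω l)) * (∑ l', Γ⁻¹ k' l' * (c * Sf ω l')) := rfl
          _ = ∑ l, ∑ l', (Γ⁻¹ k l * (c * Sf ω l)) * (Γ⁻¹ k' l' * (c * Sf ω l')) :=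
              Finset.sum_mul_sum _ _ _ _
          _ = ∑ l, ∑ l', (Γ⁻¹ k l * Γ⁻¹ k' l' * c ^ 2) * (Sf ω l * Sf ω l') :=
              Finset.sum_congr rfl fun l _ => Finset.sum_congr rfl fun l' _ => by ring
      simp only [hptw]
      rw [integral_finset_sum _ fun l _ => integrable_finset_sum _ fun l' _ =>
        (aux_int_mul (hS2 l) (hS2 l')).const_mul _]
      have step : ∀ l, (∫ ω, ∑ l', (Γ⁻¹ k l * Γ⁻¹ k' l' * c ^ 2) * (Sf ω l * Sf ω l') ∂P)
          = ∑ l', (Γ⁻¹ k l * Γ⁻¹ k' l' * c ^ 2)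
              * (((M : ℝ) * ∑ s', μ s' l) * ((M : ℝ) * ∑ s', μ s' l')
                + (M : ℝ) * ∑ s', Sig s' l l') := by
        intro l
        rw [integral_finset_sum _ fun l' _ => (aux_int_mul (hS2 l) (hS2 l')).const_mul _]
        exact Finset.sum_congr rfl fun l' _ => by rw [integral_const_mul, hSS l l']
      rw [Finset.sum_congr rfl fun l _ => step l]
      simp only [mul_add, Finset.sum_add_distrib]
      congr 1
      · -- squared-mean part
        rw [hbex k, hbex k', Finset.sum_mul_sum]
        exact Finset.sum_congr rfl fun l _ => Finset.sum_congr rfl fun l' _ => by ring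
      · -- variance part
        have B1 : ∀ l l', (Γ⁻¹ k l * Γ⁻¹ k' l' * c ^ 2) * ((M : ℝ) * ∑ s', Sig s' l l')
            = ∑ s', c ^ 2 * (M : ℝ) * (Γ⁻¹ k l * Sig s' l l' * Γ⁻¹ l' k') := by
          intro l l'
          rw [hΓsym' k' l', Finset.mul_sum, Finset.mul_sum]
          exact Finset.sum_congr rfl fun s' _ => by ring
        rw [Finset.sum_congr rfl fun l _ => Finset.sum_congr rfl fun l' _ => B1 l l']
        have B2 : ∀ l : Fin d, (∑ l', ∑ s', c ^ 2 * (M : ℝ)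
              * (Γ⁻¹ k l * Sig s' l l' * Γ⁻¹ l' k'))
            = ∑ s', ∑ l', c ^ 2 * (M : ℝ) * (Γ⁻¹ k l * Sig s' l l' * Γ⁻¹ l' k') :=
          fun l => Finset.sum_comm
        rw [Finset.sum_congr rfl fun l _ => B2 l, Finset.sum_comm, Finset.mul_sum]
        refine Finset.sum_congr rfl fun s' _ => ?_
        simp only [Matrix.mul_apply, Finset.sum_mul, Finset.mul_sum]
        rw [Finset.sum_comm]
    -- factorization via independence
    have hIfac1 : ∀ k k', ∫ ω, (xq ω k * xq ω k') * (V ω k * V ω k') ∂P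
        = Λ k k' * ∫ ω, V ω k * V ω k' ∂P := by
      intro k k'
      have hφ : Measurable fun q : (Fin d → ℝ) × ℝ => q.1 k * q.1 k' :=
        ((measurable_pi_apply k).comp measurable_fst).mul
          ((measurable_pi_apply k').comp measurable_fst)
      have hψ : Measurable fun g : (Fin T × Fin M) → (Fin d → ℝ) × ℝ => Vf g k * Vf g k' :=
        (hVfmeas k).mul (hVfmeas k')
      have hind := hQG.comp hφ hψ
      have heq := IndepFun.integral_fun_mul_eq_mul_integral hind
        ((((measurable_pi_apply k).comp hxqmeas).mul
          ((measurable_pi_apply k').comp hxqmeas)).aestronglyMeasurable)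
        ((aux_int_mul (hV2 k) (hV2 k')).aestronglyMeasurable)
      rw [show (∫ ω, (xq ω k * xq ω k') * (V ω k * V ω k') ∂P)
          = (∫ ω, xq ω k * xq ω k' ∂P) * (∫ ω, V ω k * V ω k' ∂P) from heq, hΛq k k']
    have hIfac2 : ∀ k, ∫ ω, (xq ω k * yq ω) * V ω k ∂P = μ tl k * b k := by
      intro k
      have hφ : Measurable fun q : (Fin d → ℝ) × ℝ => q.1 k * q.2 :=
        ((measurable_pi_apply k).comp measurable_fst).mul measurable_snd
      have hind := hQG.comp hφ (hVfmeas k)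
      have heq := IndepFun.integral_fun_mul_eq_mul_integral hind
        ((((measurable_pi_apply k).comp hxqmeas).mul hyqmeas).aestronglyMeasurable)
        ((hV2 k).aestronglyMeasurable)
      rw [show (∫ ω, (xq ω k * yq ω) * V ω k ∂P)
          = (∫ ω, xq ω k * yq ω ∂P) * (∫ ω, V ω k ∂P) from heq, hEq k, hVint k]
    -- integrability of the pieces
    have ipc1 : ∀ k k', Integrable (fun ω => (xq ω k * xq ω k') * (V ω k * V ω k')) P := by
      intro k k'
      have hφ : Measurable fun q : (Fin d → ℝ) × ℝ => q.1 k * q.1 k' :=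
        ((measurable_pi_apply k).comp measurable_fst).mul
          ((measurable_pi_apply k').comp measurable_fst)
      have hψ : Measurable fun g : (Fin T × Fin M) → (Fin d → ℝ) × ℝ => Vf g k * Vf g k' :=
        (hVfmeas k).mul (hVfmeas k')
      have hind := hQG.comp hφ hψ
      exact hind.integrable_mul (aux_int_mul (hxq2 k) (hxq2 k'))
        (aux_int_mul (hV2 k) (hV2 k'))
    have ipc2 : ∀ k, Integrable (fun ω => (xq ω k * yq ω) * V ω k) P := by
      intro k
      have hφ : Measurable fun q : (Fin d → ℝ) × ℝ => q.1 k * q.2 :=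
        ((measurable_pi_apply k).comp measurable_fst).mul measurable_snd
      have hind := hQG.comp hφ (hVfmeas k)
      exact hind.integrable_mul (aux_int_mul (hxq2 k) hyq2)
        ((hV2 k).integrable one_le_two)
    have I1 : Integrable (fun ω => ∑ k, ∑ k', (xq ω k * xq ω k') * (V ω k * V ω k')) P :=
      integrable_finset_sum _ fun k _ => integrable_finset_sum _ fun k' _ => ipc1 k k'
    have I2 : Integrable (fun ω => ∑ k, (xq ω k * yq ω) * V ω k) P :=
      integrable_finset_sum _ fun k _ => ipc2 k
    -- pointwise expansion of the squared error
    have hY2 : ∀ ω, Yhat ω = ∑ k, xq ω k * V ω k := by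
      intro ω
      rw [hYhat ω]
      simp only [hV, hVf, hG, dotProduct, mulVec, Pi.smul_apply, smul_eq_mul,
        Finset.sum_apply]
      refine Finset.sum_congr rfl fun k _ => ?_
      congr 1
      refine Finset.sum_congr rfl fun l _ => ?_
      congr 1
      congr 1
      rw [Fintype.sum_prod_type]
      exact Finset.sum_congr rfl fun s' _ => Finset.sum_congr rfl fun i _ => mul_comm _ _
    have hsq : ∀ ω, (Yhat ω - yq ω) ^ 2
        = (∑ k, ∑ k', (xq ω k * xq ω k') * (V ω k * V ω k'))
          - 2 * (∑ k, (xq ω k * yq ω) * V ω k) + yq ω ^ 2 := by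
      intro ω
      have e1 : (∑ k, xq ω k * V ω k) ^ 2
          = ∑ k, ∑ k', (xq ω k * xq ω k') * (V ω k * V ω k') := by
        rw [sq, Finset.sum_mul_sum]
        exact Finset.sum_congr rfl fun k _ => Finset.sum_congr rfl fun k' _ => by ring
      have e2 : (∑ k, xq ω k * V ω k) * yq ω = ∑ k, (xq ω k * yq ω) * V ω k := by
        rw [Finset.sum_mul]
        exact Finset.sum_congr rfl fun k _ => by ring
      rw [hY2 ω, sub_sq, e1, mul_assoc, e2]
    simp only [hsq]
    have im : Integrable (fun ω => 2 * ∑ k, (xq ω k * yq ω) * V ω k) P := I2.const_mul 2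
    have isub : Integrable (fun ω => (∑ k, ∑ k', (xq ω k * xq ω k') * (V ω k * V ω k'))
        - 2 * ∑ k, (xq ω k * yq ω) * V ω k) P := I1.sub im
    rw [integral_add isub hyqsqint, integral_sub I1 im, integral_const_mul]
    congr 1
    congr 1
    · rw [integral_finset_sum _ fun k _ => integrable_finset_sum _ fun k' _ => ipc1 k k']
      refine Finset.sum_congr rfl fun k _ => ?_
      rw [integral_finset_sum _ fun k' _ => ipc1 k k']
      refine Finset.sum_congr rfl fun k' _ => ?_
      rw [hIfac1 k k', hVV k k']
    · congr 1
      rw [integral_finset_sum _ fun k _ => ipc2 k]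
      exact Finset.sum_congr rfl fun k _ => hIfac2 k
  -- ===================== assembly =====================
  have part1 : ∀ w : Fin d → ℝ,
      ∫ ω, (a ⬝ᵥ xq ω - yq ω) ^ 2 ∂P ≤ ∫ ω, (w ⬝ᵥ xq ω - yq ω) ^ 2 ∂P := by
    intro w
    rw [hrisk w, hrisk a, hadot w, hadot a]
    have h1 : (0:ℝ) ≤ Qf w w - 2 * Qf w a + Qf a a := by
      have h0 : (0:ℝ) ≤ (w - a) ⬝ᵥ (Λ *ᵥ (w - a)) := by
        have := hΛpd.posSemidef.dotProduct_mulVec_nonneg (w - a)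
        simpa using this
      rwa [hexpand w a] at h0
    linarith
  have part2 : ∫ ω, (Yhat ω - yq ω) ^ 2 ∂P
      = (∫ ω, (a ⬝ᵥ xq ω - yq ω) ^ 2 ∂P)
        + ((M : ℝ) / ((T : ℝ) * ((M : ℝ) + 1) + 1) ^ 2)
            * ∑ s', (Sig s' * (Γ⁻¹ * Γ⁻¹) * Λ).trace
        + (b - a) ⬝ᵥ (Λ *ᵥ (b - a)) := by
    have A1 : (∑ k, ∑ k', Λ k k' * (b k * b k'
          + c ^ 2 * (M : ℝ) * ∑ s', (Γ⁻¹ * Sig s' * Γ⁻¹) k k'))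
        = Qf b b + c ^ 2 * (M : ℝ) * ∑ s', (Sig s' * (Γ⁻¹ * Γ⁻¹) * Λ).trace := by
      have e0 : ∀ k, (∑ k', Λ k k' * (b k * b k'
            + c ^ 2 * (M : ℝ) * ∑ s', (Γ⁻¹ * Sig s' * Γ⁻¹) k k'))
          = (∑ k', b k * b k' * Λ k k')
            + c ^ 2 * (M : ℝ) * ∑ k', ∑ s', Λ k k' * (Γ⁻¹ * Sig s' * Γ⁻¹) k k' := by
        intro k
        have e00 : ∀ k', Λ k k' * (b k * b k'
              + c ^ 2 * (M : ℝ) * ∑ s', (Γ⁻¹ * Sig s' * Γ⁻¹) k k')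
            = b k * b k' * Λ k k'
              + c ^ 2 * (M : ℝ) * ∑ s', Λ k k' * (Γ⁻¹ * Sig s' * Γ⁻¹) k k' := by
          intro k'
          rw [mul_add]
          congr 1
          · ring
          · rw [Finset.mul_sum, Finset.mul_sum, Finset.mul_sum]
            exact Finset.sum_congr rfl fun s' _ => by ring
        rw [Finset.sum_congr rfl fun k' _ => e00 k', Finset.sum_add_distrib, ← Finset.mul_sum]
      rw [Finset.sum_congr rfl fun k _ => e0 k, Finset.sum_add_distrib, ← Finset.mul_sum]
      congr 1
      have swap : (∑ k, ∑ k', ∑ s', Λ k k' * (Γ⁻¹ * Sig s' * Γ⁻¹) k k')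
          = ∑ s', ∑ k, ∑ k', Λ k k' * (Γ⁻¹ * Sig s' * Γ⁻¹) k k' := by
        have h1 : ∀ k : Fin d, (∑ k', ∑ s', Λ k k' * (Γ⁻¹ * Sig s' * Γ⁻¹) k k')
            = ∑ s', ∑ k', Λ k k' * (Γ⁻¹ * Sig s' * Γ⁻¹) k k' := fun k => Finset.sum_comm
        rw [Finset.sum_congr rfl fun k _ => h1 k]
        exact Finset.sum_comm
      rw [swap]
      congr 1
      exact Finset.sum_congr rfl fun s'' _ => htrace_id s''
    have A2 : (∑ k, μ tl k * b k) = Qf b a := by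
      rw [← hadot b]
      exact Finset.sum_congr rfl fun k _ => by ring
    have A4 : (b - a) ⬝ᵥ (Λ *ᵥ (b - a)) = Qf b b - 2 * Qf b a + Qf a a := hexpand b a
    have A5 : c ^ 2 * (M : ℝ) = (M : ℝ) / ((T : ℝ) * ((M : ℝ) + 1) + 1) ^ 2 := by
      rw [hc]
      field_simp
    rw [hmain, hrisk a, hadot a, A1, A2, A4, A5]
    ring
  exact ⟨part1, part2, part3⟩
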